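/- Let m ≥ 1, let A be a finite set, let V ⊆ A be nonempty, and for each i ∈ V let f_i : ℝ^m → ℝ ∪ {+∞} be a proper lower semicontinuous convex function with convex conjugate f_i*. Let ζ : V → ℝ^m, let w : A → ℝ^m satisfy ∑_{α∈A} w_α = ∑_{i∈V} ζ_i, let s : A → [0,∞) satisfy ∑_{α∈A} s_α = |V| and w_α = 0 whenever s_α = 0, and let x*, m̄ ∈ ℝ^m. Then (|V|/2)‖x* − m̄‖² + ∑_{i∈V} f_i(x*) − (|V|/2)‖m̄‖² + ∑_{i∈V} f_i*(ζ_i) + ∑_{α ∈ A, s_α > 0} (s_α/2)‖m̄ − w_α/s_α‖² ≥ ∑_{α ∈ A, s_α > 0} (s_α/2)‖x* − (m̄ − w_α/s_α)‖². (Here the left-hand side is interpreted in ℝ ∪ {+∞}.) -/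

import Mathlib

open scoped BigOperators

noncomputable section

abbrev Euc (m : ℕ) := EuclideanSpace ℝ (Fin m)

def EProper {E : Type*} (f : E → EReal) : Prop :=
  (∃ x, f x ≠ ⊤) ∧ ∀ x, f x ≠ ⊥

def EConvexOn {E : Type*} [AddCommGroup E] [Module ℝ E] (f : E → EReal) : Prop :=
  ∀ x y : E, ∀ a b : ℝ, 0 ≤ a → 0 ≤ b → a + b = 1 →
    f (a • x + b • y) ≤ (a : EReal) * f x + (b : EReal) * f y

def econj {E : Type*} [NormedAddCommGroup E] [InnerProductSpace ℝ E]
    (f : E → EReal) (z : E) : EReal :=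
  ⨆ x : E, ((inner ℝ z x : ℝ) : EReal) - f x

lemma econj_ne_bot' {E : Type*} [NormedAddCommGroup E] [InnerProductSpace ℝ E]
    {f : E → EReal} (hf : EProper f) (z : E) : econj f z ≠ ⊥ := by
  obtain ⟨⟨x₀, hx₀⟩, hbot⟩ := hf
  have hr : f x₀ = ((f x₀).toReal : EReal) := (EReal.coe_toReal hx₀ (hbot x₀)).symm
  have hle : (((inner ℝ z x₀ : ℝ) - (f x₀).toReal : ℝ) : EReal) ≤ econj f z := by
    have := le_iSup (fun x : E => ((inner ℝ z x : ℝ) : EReal) - f x) x₀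
    rw [hr] at this
    simpa [EReal.coe_sub, econj] using this
  intro h
  rw [h] at hle
  exact (EReal.coe_ne_bot _) (le_bot_iff.mp hle)

lemma fenchel_young' {E : Type*} [NormedAddCommGroup E] [InnerProductSpace ℝ E]
    {f : E → EReal} (hf : EProper f) (z x : E) :
    ((inner ℝ z x : ℝ) : EReal) ≤ f x + econj f z := by
  by_cases htop : f x = ⊤
  · rw [htop, EReal.top_add_of_ne_bot (econj_ne_bot' hf z)]
    exact le_top
  · have hr : f x = ((f x).toReal : EReal) := (EReal.coe_toReal htop (hf.2 x)).symm
    have hle : (((inner ℝ z x : ℝ) - (f x).toReal : ℝ) : EReal) ≤ econj f z := by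
      have := le_iSup (fun y : E => ((inner ℝ z y : ℝ) : EReal) - f y) x
      rw [hr] at this
      simpa [EReal.coe_sub, econj] using this
    calc ((inner ℝ z x : ℝ) : EReal)
        = ((f x).toReal : EReal) + (((inner ℝ z x : ℝ) - (f x).toReal : ℝ) : EReal) := by
          rw [← EReal.coe_add]; ring_nf
      _ ≤ f x + econj f z := by
          rw [hr]; exact add_le_add_right hle _


/-- duality-gap inequality (3.6): the primal objective at `x*` plus the
negated dual objective bounds the weighted sum `∑_{s_α>0} (s_α/2)‖x* − (m̄ − w_α/s_α)‖²`. -/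
theorem stmt6 {A : Type*} [Fintype A] (V : Finset A) (hV : V.Nonempty)
    (m : ℕ) (hm : 1 ≤ m) (f : A → Euc m → EReal)
    (hfp : ∀ i ∈ V, EProper (f i)) (hfl : ∀ i ∈ V, LowerSemicontinuous (f i))
    (hfc : ∀ i ∈ V, EConvexOn (f i))
    (ζ : A → Euc m) (w : A → Euc m) (hw : (∑ α : A, w α) = ∑ i ∈ V, ζ i)
    (s : A → ℝ) (hs0 : ∀ α, 0 ≤ s α) (hs1 : (∑ α : A, s α) = (V.card : ℝ))
    (hws : ∀ α, s α = 0 → w α = 0)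
    (xstar mbar : Euc m) :
    ((∑ α : A, if 0 < s α then
        (s α / 2) * ‖xstar - (mbar - (s α)⁻¹ • w α)‖ ^ 2 else 0 : ℝ) : EReal)
      ≤ ((((V.card : ℝ) / 2) * ‖xstar - mbar‖ ^ 2 : ℝ) : EReal)
          + (∑ i ∈ V, f i xstar)
          + ((-(((V.card : ℝ) / 2) * ‖mbar‖ ^ 2) : ℝ) : EReal)
          + (∑ i ∈ V, econj (f i) (ζ i))
          + ((∑ α : A, if 0 < s α then
              (s α / 2) * ‖mbar - (s α)⁻¹ • w α‖ ^ 2 else 0 : ℝ) : EReal) := by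
  classical
  set N : ℝ := (V.card : ℝ) with hN
  set a : ℝ := (N / 2) * ‖xstar - mbar‖ ^ 2 with ha
  set b : ℝ := -((N / 2) * ‖mbar‖ ^ 2) with hb
  set c : ℝ := ∑ i ∈ V, (inner ℝ (ζ i) xstar : ℝ) with hc
  set d : ℝ := ∑ α : A, (if 0 < s α then (s α / 2) * ‖mbar - (s α)⁻¹ • w α‖ ^ 2 else 0) with hd
  have key : (∑ α : A, if 0 < s α then
      (s α / 2) * ‖xstar - (mbar - (s α)⁻¹ • w α)‖ ^ 2 else 0) = a + b + c + d := by
    have hterm : ∀ α : A,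
        (if 0 < s α then (s α / 2) * ‖xstar - (mbar - (s α)⁻¹ • w α)‖ ^ 2 else 0)
        = (if 0 < s α then (s α / 2) * ‖mbar - (s α)⁻¹ • w α‖ ^ 2 else 0)
          + ((s α / 2) * ‖xstar‖ ^ 2 - s α * (inner ℝ xstar mbar : ℝ)
              + (inner ℝ xstar (w α) : ℝ)) := by
      intro α
      by_cases hα : 0 < s α
      · simp only [if_pos hα]
        have hs : s α ≠ 0 := ne_of_gt hα
        have hu : (inner ℝ xstar ((s α)⁻¹ • w α) : ℝ) = (s α)⁻¹ * (inner ℝ xstar (w α) : ℝ) :=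
          real_inner_smul_right _ _ _
        have hexp : ‖xstar - (mbar - (s α)⁻¹ • w α)‖ ^ 2
            = ‖xstar‖ ^ 2 - 2 * (inner ℝ xstar (mbar - (s α)⁻¹ • w α) : ℝ)
              + ‖mbar - (s α)⁻¹ • w α‖ ^ 2 := norm_sub_sq_real _ _
        have hin : (inner ℝ xstar (mbar - (s α)⁻¹ • w α) : ℝ)
            = (inner ℝ xstar mbar : ℝ) - (s α)⁻¹ * (inner ℝ xstar (w α) : ℝ) := by
          rw [inner_sub_right, hu]
        rw [hexp, hin]
        field_simp
        ring
      · simp only [if_neg hα]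
        have hz : s α = 0 := le_antisymm (not_lt.mp hα) (hs0 α)
        rw [hz, hws α hz]
        simp
    rw [Finset.sum_congr rfl (fun α _ => hterm α), Finset.sum_add_distrib]
    have hsum2 : (∑ α : A, ((s α / 2) * ‖xstar‖ ^ 2 - s α * (inner ℝ xstar mbar : ℝ)
          + (inner ℝ xstar (w α) : ℝ)))
        = (N / 2) * ‖xstar‖ ^ 2 - N * (inner ℝ xstar mbar : ℝ)
          + (inner ℝ xstar (∑ α : A, w α) : ℝ) := by
      rw [Finset.sum_add_distrib, Finset.sum_sub_distrib, ← Finset.sum_mul, ← Finset.sum_mul,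
        inner_sum, ← Finset.sum_div, hs1]
    have hinner : (inner ℝ xstar (∑ α : A, w α) : ℝ) = c := by
      rw [hw, hc, inner_sum]
      exact Finset.sum_congr rfl fun i _ => real_inner_comm _ _
    rw [hsum2, hinner, ha, hb]
    have hxm : ‖xstar - mbar‖ ^ 2
        = ‖xstar‖ ^ 2 - 2 * (inner ℝ xstar mbar : ℝ) + ‖mbar‖ ^ 2 := norm_sub_sq_real _ _
    rw [hxm]
    ring
  rw [key]
  have hFY : ((c : ℝ) : EReal) ≤ (∑ i ∈ V, f i xstar) + ∑ i ∈ V, econj (f i) (ζ i) := by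
    have h1 : ((c : ℝ) : EReal) = ∑ i ∈ V, ((inner ℝ (ζ i) xstar : ℝ) : EReal) := by
      rw [hc]; exact map_sum (⟨⟨Real.toEReal, EReal.coe_zero⟩, EReal.coe_add⟩ : ℝ →+ EReal) _ _
    rw [h1, ← Finset.sum_add_distrib]
    exact Finset.sum_le_sum fun i hi => fenchel_young' (hfp i hi) (ζ i) xstar
  calc ((a + b + c + d : ℝ) : EReal)
      = (((a : ℝ) : EReal) + ((b : ℝ) : EReal) + ((d : ℝ) : EReal)) + ((c : ℝ) : EReal) := by
        push_cast; abel
    _ ≤ (((a : ℝ) : EReal) + ((b : ℝ) : EReal) + ((d : ℝ) : EReal))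
        + ((∑ i ∈ V, f i xstar) + ∑ i ∈ V, econj (f i) (ζ i)) := add_le_add_right hFY _
    _ = ((a : ℝ) : EReal) + (∑ i ∈ V, f i xstar) + ((b : ℝ) : EReal)
        + (∑ i ∈ V, econj (f i) (ζ i)) + ((d : ℝ) : EReal) := by abel
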